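/- Suppose r, Ω, ψ satisfy the toroidally symmetric Einstein–Klein-Gordon system (EKG1)–(EKG5) on U. Set r̃ = 1/r, ϖ₁ = 2rᵤrᵥr/Ω² + r³/(2l²), and ϖ₂ = ϖ₁ − (2πg/l²)r³ψ². Then the renormalised radial wave equation ∂ᵤ∂ᵥr̃ = Ω²r̃²( (3/2)ϖ₂r̃² − (πg²/(l²r̃))ψ² ) holds on U; equivalently, ∂ᵤ∂ᵥr̃ = 3Ω²ϖ₂/(2r⁴) − πg²Ω²ψ²/(l²r). -/

import Mathlib

/-- Partial derivative in the first (`u`) coordinate. -/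
noncomputable def pdu (f : ℝ × ℝ → ℝ) (p : ℝ × ℝ) : ℝ := deriv (fun u => f (u, p.2)) p.1

/-- Partial derivative in the second (`v`) coordinate. -/
noncomputable def pdv (f : ℝ × ℝ → ℝ) (p : ℝ × ℝ) : ℝ := deriv (fun v => f (p.1, v)) p.2

/-- The second renormalised Hawking mass `ϖ₂ = ϖ₁ − (2πg/l²)r³ψ²`, with
`ϖ₁ = 2rᵤrᵥr/Ω² + r³/(2l²)`. -/
noncomputable def varpi2 (l g : ℝ) (r Ω ψ : ℝ × ℝ → ℝ) (q : ℝ × ℝ) : ℝ :=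
  2 * pdu r q * pdv r q * r q / (Ω q) ^ 2 + (r q) ^ 3 / (2 * l ^ 2)
    - (2 * Real.pi * g / l ^ 2) * (r q) ^ 3 * (ψ q) ^ 2

lemma sliceU {E : Type*} [NormedAddCommGroup E] [NormedSpace ℝ E]
    {f : ℝ × ℝ → E} {p : ℝ × ℝ} {f' : ℝ × ℝ →L[ℝ] E} (hf : HasFDerivAt f f' p) :
    HasDerivAt (fun u => f (u, p.2)) (f' (1, 0)) p.1 := by
  have h1 : HasDerivAt (fun u : ℝ => (u, p.2)) ((1 : ℝ), (0 : ℝ)) p.1 :=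
    (hasDerivAt_id p.1).prodMk (hasDerivAt_const p.1 p.2)
  exact hf.comp_hasDerivAt p.1 h1

lemma sliceV {E : Type*} [NormedAddCommGroup E] [NormedSpace ℝ E]
    {f : ℝ × ℝ → E} {p : ℝ × ℝ} {f' : ℝ × ℝ →L[ℝ] E} (hf : HasFDerivAt f f' p) :
    HasDerivAt (fun v => f (p.1, v)) (f' (0, 1)) p.2 := by
  have h1 : HasDerivAt (fun v : ℝ => (p.1, v)) ((0 : ℝ), (1 : ℝ)) p.2 :=
    (hasDerivAt_const p.2 p.1).prodMk (hasDerivAt_id p.2)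
  exact hf.comp_hasDerivAt p.2 h1

/-- If `r, Ω, ψ` satisfy the toroidally symmetric Einstein–Klein-Gordon system
(EKG1)–(EKG5) on an open set `U`, then with `r̃ = 1/r` the renormalised radial wave
equation `∂ᵤ∂ᵥr̃ = Ω²r̃²((3/2)ϖ₂r̃² − (πg²/(l²r̃))ψ²)` holds on `U`. -/
theorem stmt_6 (U : Set (ℝ × ℝ)) (hU : IsOpen U)
    (r Ω ψ : ℝ × ℝ → ℝ)
    (l κ a g : ℝ) (hl : 0 < l) (hκ : κ ∈ Set.Ioo (0 : ℝ) 1)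
    (ha : a = κ ^ 2 / 2 - 9 / 8) (hg : g = -3 / 2 + κ)
    (hrC : ContDiffOn ℝ 2 r U) (hΩC : ContDiffOn ℝ 2 Ω U) (hψC : ContDiffOn ℝ 2 ψ U)
    (hrpos : ∀ p ∈ U, 0 < r p) (hΩpos : ∀ p ∈ U, 0 < Ω p)
    (hEKG1 : ∀ p ∈ U, pdu (fun q => pdu r q / (Ω q) ^ 2) p
        = -(4 * Real.pi) * r p * (pdu ψ p) ^ 2 / (Ω p) ^ 2)
    (hEKG2 : ∀ p ∈ U, pdv (fun q => pdv r q / (Ω q) ^ 2) p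
        = -(4 * Real.pi) * r p * (pdv ψ p) ^ 2 / (Ω p) ^ 2)
    (hEKG3 : ∀ p ∈ U, pdv (pdu r) p = -(pdu r p * pdv r p) / r p
        + (2 * Real.pi * a * r p / l ^ 2) * (Ω p) ^ 2 * (ψ p) ^ 2
        - (3 / 4) * (r p / l ^ 2) * (Ω p) ^ 2)
    (hEKG4 : ∀ p ∈ U, pdv (pdu (fun q => Real.log (Ω q))) p
        = -(4 * Real.pi) * pdu ψ p * pdv ψ p + (pdu r p * pdv r p) / (r p) ^ 2)
    (hEKG5 : ∀ p ∈ U, pdv (pdu ψ) p = -(pdu r p / r p) * pdv ψ p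
        - (pdv r p / r p) * pdu ψ p - ((Ω p) ^ 2 * a / (2 * l ^ 2)) * ψ p) :
    ∀ p ∈ U,
      pdu (pdv (fun q => 1 / r q)) p
        = (Ω p) ^ 2 * (1 / r p) ^ 2
            * ((3 / 2) * varpi2 l g r Ω ψ p * (1 / r p) ^ 2
               - (Real.pi * g ^ 2 / (l ^ 2 * (1 / r p))) * (ψ p) ^ 2) := by
  intro p hp
  set F := fderiv ℝ r with hF
  have hrU : ∀ q ∈ U, HasFDerivAt r (F q) q := fun q hq =>
    ((hrC.contDiffAt (hU.mem_nhds hq)).differentiableAt (by norm_num)).hasFDerivAt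
  have hFC : ContDiffOn ℝ 1 F U := hrC.fderiv_of_isOpen hU (by norm_num)
  have hFdiff : DifferentiableAt ℝ F p :=
    (hFC.contDiffAt (hU.mem_nhds hp)).differentiableAt one_ne_zero
  set F2 := fderiv ℝ F p with hF2
  have hsymm : ∀ v w, F2 v w = F2 w v :=
    second_derivative_symmetric_of_eventually
      (Filter.eventually_of_mem (hU.mem_nhds hp) hrU) hFdiff.hasFDerivAt
  -- pdu/pdv of r in terms of F
  have hpdu : ∀ q ∈ U, pdu r q = F q (1, 0) := fun q hq => (sliceU (hrU q hq)).deriv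
  have hpdv : ∀ q ∈ U, pdv r q = F q (0, 1) := fun q hq => (sliceV (hrU q hq)).deriv
  -- neighbourhoods along slices through p
  have hUu : ∀ᶠ u in nhds p.1, (u, p.2) ∈ U := by
    have : ContinuousAt (fun u : ℝ => (u, p.2)) p.1 :=
      (continuous_id.prodMk continuous_const).continuousAt
    exact this.preimage_mem_nhds (hU.mem_nhds hp)
  have hUv : ∀ᶠ v in nhds p.2, (p.1, v) ∈ U := by
    have : ContinuousAt (fun v : ℝ => (p.1, v)) p.2 :=
      (continuous_const.prodMk continuous_id).continuousAt
    exact this.preimage_mem_nhds (hU.mem_nhds hp)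
  -- mixed derivative: u-derivative of pdv r along the u-slice
  have hmix : HasDerivAt (fun u => pdv r (u, p.2)) (F2 (1, 0) (0, 1)) p.1 := by
    have hFu : HasDerivAt (fun u => F (u, p.2)) (F2 (1, 0)) p.1 := sliceU hFdiff.hasFDerivAt
    have h2 : HasDerivAt (fun u => F (u, p.2) (0, 1)) (F2 (1, 0) (0, 1)) p.1 :=
      (ContinuousLinearMap.apply ℝ ℝ ((0 : ℝ), (1 : ℝ))).hasFDerivAt.comp_hasDerivAt p.1 hFu
    refine h2.congr_of_eventuallyEq ?_
    filter_upwards [hUu] with u hu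
    exact hpdv _ hu
  -- v-derivative of pdu r along the v-slice
  have hmix' : HasDerivAt (fun v => pdu r (p.1, v)) (F2 (0, 1) (1, 0)) p.2 := by
    have hFv : HasDerivAt (fun v => F (p.1, v)) (F2 (0, 1)) p.2 := sliceV hFdiff.hasFDerivAt
    have h2 : HasDerivAt (fun v => F (p.1, v) (1, 0)) (F2 (0, 1) (1, 0)) p.2 :=
      (ContinuousLinearMap.apply ℝ ℝ ((1 : ℝ), (0 : ℝ))).hasFDerivAt.comp_hasDerivAt p.2 hFv
    refine h2.congr_of_eventuallyEq ?_
    filter_upwards [hUv] with v hv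
    exact hpdu _ hv
  have hmixed_eq : pdv (pdu r) p = F2 (0, 1) (1, 0) := hmix'.deriv
  -- first v-derivative of 1/r on U
  have hinv : ∀ q ∈ U, pdv (fun q => 1 / r q) q = -(pdv r q) / (r q) ^ 2 := by
    intro q hq
    have h1 : HasDerivAt (fun v => r (q.1, v)) (pdv r q) q.2 := by
      have := sliceV (hrU q hq)
      rwa [hpdv q hq]
    have h2 := h1.inv (ne_of_gt (hrpos q hq))
    have h3 : HasDerivAt (fun v => 1 / r (q.1, v)) (-(pdv r q) / (r q) ^ 2) q.2 := by
      simpa [one_div, Pi.inv_def] using h2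
    exact h3.deriv
  -- slice derivative of r at p
  have hru : HasDerivAt (fun u => r (u, p.2)) (pdu r p) p.1 := by
    have := sliceU (hrU p hp)
    rwa [hpdu p hp]
  have hrne : r p ≠ 0 := ne_of_gt (hrpos p hp)
  -- the u-derivative of pdv(1/r) along the u-slice
  have hkey : HasDerivAt (fun u => pdv (fun q => 1 / r q) (u, p.2))
      ((-(F2 (1, 0) (0, 1)) * (r p) ^ 2 - (-(pdv r p)) * ((2 : ℕ) * r p ^ 1 * pdu r p))
        / ((r p) ^ 2) ^ 2) p.1 := by
    have hnum : HasDerivAt (fun u => -(pdv r (u, p.2))) (-(F2 (1, 0) (0, 1))) p.1 := hmix.neg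
    have hden : HasDerivAt (fun u => (r (u, p.2)) ^ 2) ((2 : ℕ) * r p ^ 1 * pdu r p) p.1 :=
      hru.pow 2
    have hd := hnum.div hden (by positivity)
    refine hd.congr_of_eventuallyEq ?_
    filter_upwards [hUu] with u hu
    exact hinv _ hu
  have hLHS : pdu (pdv (fun q => 1 / r q)) p
      = (-(F2 (1, 0) (0, 1)) * (r p) ^ 2 - (-(pdv r p)) * ((2 : ℕ) * r p ^ 1 * pdu r p))
        / ((r p) ^ 2) ^ 2 := hkey.deriv
  -- use symmetry and EKG3
  have hsym : F2 (1, 0) (0, 1) = pdv (pdu r) p := by rw [hmixed_eq]; exact hsymm _ _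
  rw [hLHS, hsym, hEKG3 p hp]
  have hΩne : Ω p ≠ 0 := ne_of_gt (hΩpos p hp)
  have hlne : l ≠ 0 := ne_of_gt hl
  subst ha hg
  unfold varpi2
  field_simp
  ring
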